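/- On L²(ℝ) ⊕ L²(ℝ) with ρ(u) = e^{iβx} ⊕ e^{iβx}, ρ(p) = [[0, e^{−2αP}],[e^{−2αP}, 0]], and ρ(x) = [[0, 2sin(β(x−αi))·e^{2αP}],[e^{2αP}·2sin(β(x+αi)), 0]], where α, β ∈ ℝ, αβ = γ, q = e^{2γ}: on the invariant dense core D₀ ⊕ D₀, the relation ρ(p)ρ(x) = i q^{1/2} ρ(u)^{−1} − i q^{−1/2} ρ(u) holds. -/
import Mathlib


open Complex

/-- The operator `e^{sP}` acting on holomorphic functions: `(e^{sP} f)(z) = f(z - si)`. -/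
def expP (s : ℝ) (f : ℂ → ℂ) : ℂ → ℂ := fun z => f (z - s * Complex.I)

/-- `ρ(p) = [[0, e^{-2αP}], [e^{-2αP}, 0]]` on pairs of functions. -/
def rhoP (α : ℝ) (η : (ℂ → ℂ) × (ℂ → ℂ)) : (ℂ → ℂ) × (ℂ → ℂ) :=
  (expP (-(2 * α)) η.2, expP (-(2 * α)) η.1)

/-- `ρ(x) = [[0, 2sin(β(x-αi))·e^{2αP}], [e^{2αP}·2sin(β(x+αi)), 0]]` on pairs. -/
noncomputable def rhoX (α β : ℝ) (η : (ℂ → ℂ) × (ℂ → ℂ)) : (ℂ → ℂ) × (ℂ → ℂ) :=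
  (fun z => 2 * Complex.sin (β * (z - α * Complex.I)) * expP (2 * α) η.2 z,
   expP (2 * α) (fun z => 2 * Complex.sin (β * (z + α * Complex.I)) * η.1 z))

lemma key_sin (α β x : ℝ) :
    2 * Complex.sin (β * ((x:ℂ) + α * Complex.I)) =
      Complex.I * (Real.exp (α*β) : ℂ) * Complex.exp (-(Complex.I * β * x)) -
        Complex.I * ((Real.exp (α*β) : ℂ))⁻¹ * Complex.exp (Complex.I * β * x) := by
  rw [Complex.sin]
  have h1 : -(β * ((x:ℂ) + α * Complex.I)) * Complex.I
      = -(Complex.I * β * x) + (α*β : ℝ) := by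
    push_cast; ring_nf; rw [Complex.I_sq]; ring
  have h2 : (β * ((x:ℂ) + α * Complex.I)) * Complex.I
      = Complex.I * β * x + (-(α*β) : ℝ) := by
    push_cast; ring_nf; rw [Complex.I_sq]; ring
  rw [h1, h2, Complex.exp_add, Complex.exp_add, ← Complex.ofReal_exp, ← Complex.ofReal_exp,
    Real.exp_neg]
  push_cast
  ring

/-- On the core `D₀ ⊕ D₀`, `ρ(p)ρ(x) = i q^{1/2} ρ(u)⁻¹ − i q^{-1/2} ρ(u)`, where
`ρ(u) = e^{iβx} ⊕ e^{iβx}`, `q^{1/2} = e^{αβ}` and `q = e^{2αβ}`: componentwise, for each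
component `η_j` and real `x`,
`(ρ(p)ρ(x)η)_j(x) = i q^{1/2} e^{-iβx} η_j(x) − i q^{-1/2} e^{iβx} η_j(x)`. -/
theorem rho_p_rho_x_relation (α β q s : ℝ) (hq : q = Real.exp (2 * (α * β)))
    (hs : s = Real.exp (α * β)) (η₁ η₂ : ℂ → ℂ) (x : ℝ) :
    ((rhoP α (rhoX α β (η₁, η₂))).1 (x : ℂ) =
      Complex.I * s * Complex.exp (-(Complex.I * β * x)) * η₁ (x : ℂ) -
        Complex.I * (s : ℂ)⁻¹ * Complex.exp (Complex.I * β * x) * η₁ (x : ℂ)) ∧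
    ((rhoP α (rhoX α β (η₁, η₂))).2 (x : ℂ) =
      Complex.I * s * Complex.exp (-(Complex.I * β * x)) * η₂ (x : ℂ) -
        Complex.I * (s : ℂ)⁻¹ * Complex.exp (Complex.I * β * x) * η₂ (x : ℂ)) := by
  subst hs
  have harg1 : (x:ℂ) - (-(2*α):ℝ) * Complex.I - (2*α:ℝ) * Complex.I = (x:ℂ) := by
    push_cast; ring
  have harg2 : (x:ℂ) - (-(2*α):ℝ) * Complex.I - (2*α:ℝ) * Complex.I + (α:ℝ) * Complex.I
      = (x:ℂ) + α * Complex.I := by push_cast; ring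
  have harg3 : (x:ℂ) - (-(2*α):ℝ) * Complex.I - (α:ℝ) * Complex.I
      = (x:ℂ) + α * Complex.I := by push_cast; ring
  constructor
  · simp only [rhoP, rhoX, expP]
    rw [show β * ((x:ℂ) - (-(2*α):ℝ) * Complex.I - (2*α:ℝ) * Complex.I + (α:ℝ) * Complex.I)
        = β * ((x:ℂ) + α * Complex.I) from by rw [harg2], harg1, key_sin]
    ring
  · simp only [rhoP, rhoX, expP]
    rw [show β * ((x:ℂ) - (-(2*α):ℝ) * Complex.I - (α:ℝ) * Complex.I)
        = β * ((x:ℂ) + α * Complex.I) from by rw [harg3], harg1, key_sin]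
    ring
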